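/- Let X take values in an interval I and suppose the treatment probability function p : I → [0,1] has exactly one discontinuity at c, the conditional expectations E[Y^(i) | X = x, C_T] are continuous in x for each potential outcome i ∈ {0,1} and compliance type in {Always-taker, Never-taker, Complier}, the conditional probabilities P(C_T = c_T | X = x) are continuous in x, there are no defiers (treatment probability is monotone in x for each unit), and the compliance jump p(c) - lim_{x↑c} p(x) is nonzero. Then the local average treatment effect for compliers at c satisfies E[Y^(1) - Y^(0) | X = c, Complier] = (lim_{x↓c} E[Y|X=x] - lim_{x↑c} E[Y|X=x]) / (lim_{x↓c} P(T=1|X=x) - lim_{x↑c} P(T=1|X=x)). -/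

import Mathlib

open Filter Set

/-- **Fuzzy RDD identification with a single cutoff.**
`πA, πN, πC` are the conditional probabilities of the compliance types
(always-taker, never-taker, complier) given `X = x`; `m1A, m0N` are the
conditional means of the relevant potential outcomes for always/never-takers,
and `m1C, m0C` those for compliers. The observed conditional mean outcome `μ`
and treatment probability `pT` decompose accordingly: compliers are treated
iff `x ≥ c` (no defiers), always-takers always, never-takers never.
All conditional means and type probabilities are continuous in `x`, and the
compliance jump `πC c` is nonzero. Then the local average treatment effect for
compliers at `c`, namely `m1C c - m0C c`, equals the ratio of the jumps of `μ`
and `pT` at `c`. -/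
theorem fuzzy_rdd_identification
    (c : ℝ) (πA πN πC m1A m0N m1C m0C μ pT : ℝ → ℝ)
    (hπA : Continuous πA) (hπN : Continuous πN) (hπC : Continuous πC)
    (hm1A : Continuous m1A) (hm0N : Continuous m0N)
    (hm1C : Continuous m1C) (hm0C : Continuous m0C)
    (hμ : ∀ x, μ x = m1A x * πA x + m0N x * πN x +
      (if c ≤ x then m1C x else m0C x) * πC x)
    (hpT : ∀ x, pT x = πA x + (if c ≤ x then πC x else 0))
    (hjump : πC c ≠ 0) :
    ∀ μR μL pR pL : ℝ,
      Tendsto μ (nhdsWithin c (Ioi c)) (nhds μR) →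
      Tendsto μ (nhdsWithin c (Iio c)) (nhds μL) →
      Tendsto pT (nhdsWithin c (Ioi c)) (nhds pR) →
      Tendsto pT (nhdsWithin c (Iio c)) (nhds pL) →
      m1C c - m0C c = (μR - μL) / (pR - pL) := by
  intro μR μL pR pL hμR hμL hpR hpL
  have hR : Tendsto μ (nhdsWithin c (Ioi c))
      (nhds (m1A c * πA c + m0N c * πN c + m1C c * πC c)) := by
    apply Filter.Tendsto.congr' _
      ((((hm1A.mul hπA).add (hm0N.mul hπN)).add (hm1C.mul hπC)).tendsto c |>.mono_left
        nhdsWithin_le_nhds)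
    filter_upwards [self_mem_nhdsWithin] with x hx
    rw [hμ x, if_pos (le_of_lt hx)]
    rfl
  have hL : Tendsto μ (nhdsWithin c (Iio c))
      (nhds (m1A c * πA c + m0N c * πN c + m0C c * πC c)) := by
    apply Filter.Tendsto.congr' _
      ((((hm1A.mul hπA).add (hm0N.mul hπN)).add (hm0C.mul hπC)).tendsto c |>.mono_left
        nhdsWithin_le_nhds)
    filter_upwards [self_mem_nhdsWithin] with x hx
    rw [hμ x, if_neg (not_le.mpr hx)]
    rfl
  have hpR' : Tendsto pT (nhdsWithin c (Ioi c)) (nhds (πA c + πC c)) := by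
    apply Filter.Tendsto.congr' _
      ((hπA.add hπC).tendsto c |>.mono_left nhdsWithin_le_nhds)
    filter_upwards [self_mem_nhdsWithin] with x hx
    rw [hpT x, if_pos (le_of_lt hx)]
    rfl
  have hpL' : Tendsto pT (nhdsWithin c (Iio c)) (nhds (πA c)) := by
    apply Filter.Tendsto.congr' _ (hπA.tendsto c |>.mono_left nhdsWithin_le_nhds)
    filter_upwards [self_mem_nhdsWithin] with x hx
    rw [hpT x, if_neg (not_le.mpr hx), add_zero]
  have e1 : μR = m1A c * πA c + m0N c * πN c + m1C c * πC c := tendsto_nhds_unique hμR hR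
  have e2 : μL = m1A c * πA c + m0N c * πN c + m0C c * πC c := tendsto_nhds_unique hμL hL
  have e3 : pR = πA c + πC c := tendsto_nhds_unique hpR hpR'
  have e4 : pL = πA c := tendsto_nhds_unique hpL hpL'
  subst e1 e2 e3 e4
  field_simp
  ring_nf
  simp [hjump]
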